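/- Let f, g, H be elements of the Laurent polynomial ring ℤ[T,T⁻¹] and let ε ∈ {1, −1}. If ε·(H · invert(H)) = f·(4T − 7 + 4T⁻¹) + 2·(g · invert(g)), then the Laurent polynomial 4T − 7 + 4T⁻¹ divides g in ℤ[T,T⁻¹]. -/

import Mathlib

open LaurentPolynomial

open Complex

noncomputable section Delta74aux
namespace Delta74aux

def sc : ℂ := (Real.sqrt 15 : ℝ)

lemma sc_sq : sc ^ 2 = 15 := by
  rw [sc, ← Complex.ofReal_pow, Real.sq_sqrt (by norm_num : (0:ℝ) ≤ 15)]
  norm_num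

def al : ℂ := (7 + I * sc) / 8
def be : ℂ := (7 - I * sc) / 8

lemma al_mul_be : al * be = 1 := by
  rw [al, be]
  field_simp
  linear_combination (-sc^2) * Complex.I_sq + sc_sq

def u : ℂˣ := ⟨al, be, al_mul_be, by rw [mul_comm]; exact al_mul_be⟩

lemma be_eq_inv : be = al⁻¹ :=
  eq_inv_of_mul_eq_one_right al_mul_be

def φ : LaurentPolynomial ℤ →ₐ[ℤ] ℂ :=
  AddMonoidAlgebra.lift ℤ ℂ ℤ ((Units.coeHom ℂ).comp (zpowersHom ℂˣ u))

lemma φ_T (n : ℤ) : φ (T n) = al ^ n := by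
  have : (T n : LaurentPolynomial ℤ) = AddMonoidAlgebra.single n 1 := rfl
  rw [φ, this, AddMonoidAlgebra.lift_single]
  simp [zpowersHom_apply, Units.val_zpow_eq_zpow_val]
  rfl

lemma φ_C (a : ℤ) : φ (C a) = a := by
  rw [C_eq_algebraMap, AlgHom.commutes]
  simp

end Delta74aux

namespace Delta74aux

lemma conj_sc : (starRingEnd ℂ) sc = sc := by rw [sc, Complex.conj_ofReal]

lemma conj_al : (starRingEnd ℂ) al = al⁻¹ := by
  rw [← be_eq_inv, al, be]
  simp only [map_div₀, map_add, map_sub, map_mul, conj_sc, Complex.conj_I, map_ofNat]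
  ring

lemma al_ne_zero : al ≠ 0 := by
  intro h
  have := al_mul_be
  rw [h, zero_mul] at this
  exact one_ne_zero this.symm

lemma φ_invert (x : LaurentPolynomial ℤ) : φ (invert x) = (starRingEnd ℂ) (φ x) := by
  induction x using LaurentPolynomial.induction_on' with
  | add p q hp hq => simp only [map_add, hp, hq]
  | C_mul_T n a =>
      simp only [map_mul, invert_C, invert_T, φ_T, φ_C, map_zpow₀, conj_al, map_intCast,
        zpow_neg, inv_zpow]

lemma hIsq : (I * sc)^2 = -15 := by
  rw [mul_pow, I_sq, sc_sq]; ring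

lemma h8al : (8:ℂ) * al = 7 + I * sc := by rw [al]; ring

lemma h8be : (8:ℂ) * al⁻¹ = 7 - I * sc := by rw [← be_eq_inv, be]; ring

lemma pow_mem (n : ℤ) : ∃ p q : ℤ, ∃ k : ℕ, (2:ℂ)^k * al ^ n = p + q * I * sc := by
  induction n using Int.induction_on with
  | zero => exact ⟨1, 0, 0, by norm_num⟩
  | succ n ih =>
      obtain ⟨p, q, k, ih⟩ := ih
      refine ⟨7*p - 15*q, p + 7*q, k+3, ?_⟩
      rw [zpow_add_one₀ al_ne_zero]
      push_cast
      linear_combination (8*al)*ih + ((p:ℂ) + q*I*sc)*h8al + (q:ℂ)*hIsq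
  | pred n ih =>
      obtain ⟨p, q, k, ih⟩ := ih
      refine ⟨7*p + 15*q, 7*q - p, k+3, ?_⟩
      rw [zpow_sub_one₀ al_ne_zero]
      push_cast
      linear_combination (8*al⁻¹)*ih + ((p:ℂ) + q*I*sc)*h8be - (q:ℂ)*hIsq

lemma mem (x : LaurentPolynomial ℤ) :
    ∃ a b : ℤ, ∃ k : ℕ, (2:ℂ)^k * φ x = a + b * I * sc := by
  induction x using LaurentPolynomial.induction_on' with
  | add p q hp hq =>
      obtain ⟨a₁, b₁, k₁, h₁⟩ := hp
      obtain ⟨a₂, b₂, k₂, h₂⟩ := hq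
      refine ⟨2^k₂*a₁ + 2^k₁*a₂, 2^k₂*b₁ + 2^k₁*b₂, k₁+k₂, ?_⟩
      rw [map_add]
      push_cast
      linear_combination (2:ℂ)^k₂ * h₁ + (2:ℂ)^k₁ * h₂
  | C_mul_T n a =>
      obtain ⟨p, q, k, h⟩ := pow_mem n
      refine ⟨a*p, a*q, k, ?_⟩
      rw [map_mul, φ_C, φ_T]
      push_cast
      linear_combination (a:ℂ) * h

end Delta74aux

namespace Delta74aux

lemma zmod3_sq (x y : ZMod 3) (h : x^2 = 2*y^2) : x = 0 ∧ y = 0 := by revert x y h; decide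

lemma zmod3_aux (x y : ZMod 3) (h : 2*y^2 = 4*x^2) : x^2 = 2*y^2 := by revert x y h; decide

lemma descent (k j : ℕ) (n : ℕ) : ∀ a b c d : ℤ,
    a.natAbs + b.natAbs + c.natAbs + d.natAbs = n →
    4^k * (a^2 + 15*b^2) = 2 * 4^j * (c^2 + 15*d^2) →
    a = 0 ∧ b = 0 ∧ c = 0 ∧ d = 0 := by
  induction n using Nat.strong_induction_on with
  | _ n ih =>
    intro a b c d hn h
    by_cases h0 : a = 0 ∧ b = 0 ∧ c = 0 ∧ d = 0
    · exact h0
    have h4 : (4 : ZMod 3) = 1 := by decide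
    have h15 : (15 : ZMod 3) = 0 := by decide
    -- mod 3 : a² = 2 c²
    have h3 : ((a : ZMod 3))^2 = 2 * (c : ZMod 3)^2 := by
      have := congrArg (fun z : ℤ => (z : ZMod 3)) h
      push_cast at this
      rw [h4, h15, one_pow, one_pow] at this
      linear_combination this
    obtain ⟨ha3, hc3⟩ := zmod3_sq _ _ h3
    obtain ⟨a', rfl⟩ := (ZMod.intCast_zmod_eq_zero_iff_dvd a 3).mp ha3
    obtain ⟨c', rfl⟩ := (ZMod.intCast_zmod_eq_zero_iff_dvd c 3).mp hc3
    have h' : 4^k * (3*a'^2 + 5*b^2) = 2 * 4^j * (3*c'^2 + 5*d^2) := by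
      have h3' : (3:ℤ) * (4^k * (3*a'^2 + 5*b^2)) = 3 * (2 * 4^j * (3*c'^2 + 5*d^2)) := by
        linear_combination h
      exact mul_left_cancel₀ (by norm_num) h3'
    have h3b : ((d : ZMod 3))^2 = 2 * (b : ZMod 3)^2 := by
      have := congrArg (fun z : ℤ => (z : ZMod 3)) h'
      push_cast at this
      rw [h4, one_pow, one_pow] at this
      have h5 : (5 : ZMod 3) = 2 := by decide
      have hthree : (3 : ZMod 3) = 0 := by decide
      rw [h5, hthree] at this
      refine zmod3_aux _ _ ?_
      linear_combination this
    obtain ⟨hd3, hb3⟩ := zmod3_sq _ _ h3b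
    obtain ⟨b', rfl⟩ := (ZMod.intCast_zmod_eq_zero_iff_dvd b 3).mp hb3
    obtain ⟨d', rfl⟩ := (ZMod.intCast_zmod_eq_zero_iff_dvd d 3).mp hd3
    have h'' : 4^k * (a'^2 + 15*b'^2) = 2 * 4^j * (c'^2 + 15*d'^2) := by
      have h3'' : (3:ℤ) * (4^k * (a'^2 + 15*b'^2)) = 3 * (2 * 4^j * (c'^2 + 15*d'^2)) := by
        linear_combination h'
      exact mul_left_cancel₀ (by norm_num) h3''
    have hlt : a'.natAbs + b'.natAbs + c'.natAbs + d'.natAbs < n := by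
      have e1 : (3*a').natAbs = 3 * a'.natAbs := by rw [Int.natAbs_mul]; norm_num
      have e2 : (3*b').natAbs = 3 * b'.natAbs := by rw [Int.natAbs_mul]; norm_num
      have e3 : (3*c').natAbs = 3 * c'.natAbs := by rw [Int.natAbs_mul]; norm_num
      have e4 : (3*d').natAbs = 3 * d'.natAbs := by rw [Int.natAbs_mul]; norm_num
      have hne : a' ≠ 0 ∨ b' ≠ 0 ∨ c' ≠ 0 ∨ d' ≠ 0 := by
        by_contra hc
        push_neg at hc
        exact h0 ⟨by rw [hc.1, mul_zero], by rw [hc.2.1, mul_zero],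
          by rw [hc.2.2.1, mul_zero], by rw [hc.2.2.2, mul_zero]⟩
      rcases hne with h1 | h1 | h1 | h1 <;>
        · have := Int.natAbs_pos.mpr h1
          omega
    obtain ⟨ha, hb, hc, hd⟩ := ih _ hlt a' b' c' d' rfl h''
    exact ⟨by rw [ha, mul_zero], by rw [hb, mul_zero], by rw [hc, mul_zero], by rw [hd, mul_zero]⟩

end Delta74aux

namespace Delta74aux
open Polynomial

lemma eval_toLaurent (p : Polynomial ℤ) :
    φ (p.toLaurent) = Polynomial.eval₂ (Int.castRingHom ℂ) al p := by
  have hext : (φ.toRingHom.comp Polynomial.toLaurent)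
      = Polynomial.eval₂RingHom (Int.castRingHom ℂ) al := by
    apply Polynomial.ringHom_ext
    · intro a
      simp [Polynomial.toLaurent_C, φ_C]
    · simp [Polynomial.toLaurent_X, φ_T]
  exact DFunLike.congr_fun hext p

lemma al_re : al.re = 7/8 := by
  simp [al, sc]

lemma al_im : al.im = Real.sqrt 15 / 8 := by
  simp [al, sc]

lemma m_aeval : Polynomial.aeval al ((X:ℚ[X])^2 - Polynomial.C (7/4) * X + 1) = 0 := by
  simp only [map_add, map_sub, map_mul, map_pow, Polynomial.aeval_X, Polynomial.aeval_C, map_one]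
  rw [show (algebraMap ℚ ℂ) (7/4) = (7/4 : ℂ) by norm_num]
  rw [al]
  field_simp
  linear_combination 4*hIsq

lemma monic_m : ((X:ℚ[X])^2 - Polynomial.C (7/4) * X + 1).Monic := by
  monicity!

lemma degree_m : ((X:ℚ[X])^2 - Polynomial.C (7/4) * X + 1).degree = 2 := by
  compute_degree!

lemma qZ_primitive : (Polynomial.C 4 * (X:ℤ[X])^2 - Polynomial.C 7 * X + Polynomial.C 4).IsPrimitive := by
  intro r hr
  rw [Polynomial.C_dvd_iff_dvd_coeff] at hr
  have h1 := hr 1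
  have h2 := hr 2
  have hc1 : (Polynomial.C 4 * (X:ℤ[X])^2 - Polynomial.C 7 * X + Polynomial.C 4).coeff 1 = -7 := by
    simp [Polynomial.coeff_C_mul, Polynomial.coeff_X_pow, Polynomial.coeff_C]
  have hc2 : (Polynomial.C 4 * (X:ℤ[X])^2 - Polynomial.C 7 * X + Polynomial.C 4).coeff 2 = 4 := by
    simp [Polynomial.coeff_C_mul, Polynomial.coeff_X_pow, Polynomial.coeff_C, Polynomial.coeff_X]
  rw [hc1] at h1; rw [hc2] at h2
  exact isUnit_of_dvd_one (by
    have : (1:ℤ) = 2*4 + (-7) := by norm_num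
    rw [this]
    exact dvd_add (Dvd.dvd.mul_left h2 2) h1)

lemma qZ_map : (Polynomial.C 4 * (X:ℤ[X])^2 - Polynomial.C 7 * X + Polynomial.C 4).map (Int.castRingHom ℚ)
    = Polynomial.C (4:ℚ) * ((X:ℚ[X])^2 - Polynomial.C (7/4) * X + 1) := by
  have hC : (4:ℚ[X]) * Polynomial.C (7/4:ℚ) = 7 := by
    have h4 : ((4:ℚ[X])) = Polynomial.C (4:ℚ) := (map_ofNat Polynomial.C 4).symm
    have h7 : ((7:ℚ[X])) = Polynomial.C (7:ℚ) := (map_ofNat Polynomial.C 7).symm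
    rw [h4, h7, ← Polynomial.C_mul]
    norm_num
  simp only [Polynomial.map_add, Polynomial.map_sub, Polynomial.map_mul, Polynomial.map_pow,
    Polynomial.map_X, Polynomial.map_C, map_ofNat, Polynomial.map_ofNat]
  linear_combination (Polynomial.X : ℚ[X]) * hC

lemma toLaurent_qZ :
    (Polynomial.C 4 * (X:ℤ[X])^2 - Polynomial.C 7 * X + Polynomial.C 4).toLaurent
      = (4 * T 1 - 7 + 4 * T (-1)) * T 1 := by
  rw [map_add, map_sub, map_mul, map_mul, map_pow, Polynomial.toLaurent_X, Polynomial.toLaurent_C,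
    Polynomial.toLaurent_C]
  rw [add_mul, sub_mul, mul_T_assoc, mul_T_assoc, T_pow]
  rw [show ((4:ℤ[T;T⁻¹])) = LaurentPolynomial.C (4:ℤ) from (map_ofNat LaurentPolynomial.C 4).symm,
    show ((7:ℤ[T;T⁻¹])) = LaurentPolynomial.C (7:ℤ) from (map_ofNat LaurentPolynomial.C 7).symm]
  norm_num

lemma dvd_of_phi_eq_zero (g : LaurentPolynomial ℤ) (hg : φ g = 0) :
    (4 * T 1 - 7 + 4 * T (-1) : LaurentPolynomial ℤ) ∣ g := by
  by_cases hg0 : g = 0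
  · simp [hg0]
  obtain ⟨n, p, hp⟩ := exists_T_pow g
  have hgT : g = p.toLaurent * T (-n) := by
    rw [hp, mul_T_assoc]
    simp
  have hp0 : p ≠ 0 := by
    intro h0
    apply hg0
    rw [hgT, h0, map_zero, zero_mul]
  -- p(al) = 0
  have hpal : Polynomial.eval₂ (Int.castRingHom ℂ) al p = 0 := by
    rw [← eval_toLaurent, hp, map_mul, hg, zero_mul]
  set m : ℚ[X] := (X:ℚ[X])^2 - Polynomial.C (7/4) * X + 1 with hmdef
  set pq : ℚ[X] := p.map (Int.castRingHom ℚ) with hpqdef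
  have hpq_aeval : Polynomial.aeval al pq = 0 := by
    rw [hpqdef, Polynomial.aeval_def, Polynomial.eval₂_map,
      show (algebraMap ℚ ℂ).comp (Int.castRingHom ℚ) = Int.castRingHom ℂ from
        RingHom.ext_int _ _]
    exact hpal
  -- remainder
  set r : ℚ[X] := pq %ₘ m with hrdef
  have hr_aeval : Polynomial.aeval al r = 0 := by
    have hdiv := Polynomial.modByMonic_add_div pq m
    have := congrArg (Polynomial.aeval al) hdiv
    rw [map_add, map_mul, m_aeval, zero_mul, add_zero] at this
    rw [hrdef, this]
    exact hpq_aeval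
  have hrdeg : r.degree ≤ 1 := by
    have h2 := Polynomial.degree_modByMonic_lt pq monic_m
    rw [degree_m] at h2
    rw [← hrdef] at h2
    by_cases hr0 : r = 0
    · rw [hr0]
      simp
    · have h3 : r.natDegree < 2 := (Polynomial.natDegree_lt_iff_degree_lt hr0).mpr
        (by exact_mod_cast h2)
      exact Polynomial.natDegree_le_iff_degree_le.mp (Nat.lt_succ_iff.mp h3)
  have hr_eq := Polynomial.eq_X_add_C_of_degree_le_one hrdeg
  -- coefficients vanish
  have hcoeffs : r.coeff 1 = 0 ∧ r.coeff 0 = 0 := by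
    rw [hr_eq] at hr_aeval
    rw [map_add, map_mul, Polynomial.aeval_X, Polynomial.aeval_C, Polynomial.aeval_C] at hr_aeval
    simp only [show ∀ q : ℚ, algebraMap ℚ ℂ q = (q:ℂ) from fun q => by norm_num] at hr_aeval
    have him := congrArg Complex.im hr_aeval
    have hre := congrArg Complex.re hr_aeval
    simp only [Complex.add_im, Complex.mul_im, Complex.ratCast_im, Complex.ratCast_re,
      Complex.add_re, Complex.mul_re, Complex.zero_im, Complex.zero_re, al_im, al_re,
      zero_mul, mul_zero, add_zero, zero_add] at him hre
    have hsqrt : Real.sqrt 15 ≠ 0 := by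
      positivity
    have h1 : (r.coeff 1 : ℝ) = 0 := by
      rcases mul_eq_zero.mp him with h | h
      · exact h
      · exfalso; apply hsqrt; linarith
    have h1' : r.coeff 1 = 0 := by exact_mod_cast h1
    refine ⟨h1', ?_⟩
    rw [h1'] at hre
    push_cast at hre
    norm_num at hre
    exact_mod_cast hre
  have hr0 : r = 0 := by
    rw [hr_eq, hcoeffs.1, hcoeffs.2]
    simp
  have hm_dvd : m ∣ pq := (Polynomial.modByMonic_eq_zero_iff_dvd monic_m).mp hr0
  -- lift along C 4
  set qQ : ℚ[X] := Polynomial.C (4:ℚ) * m with hqQdef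
  have hqQ_dvd : qQ ∣ pq := by
    obtain ⟨s, hs⟩ := hm_dvd
    refine ⟨Polynomial.C (4⁻¹:ℚ) * s, ?_⟩
    rw [hs, hqQdef]
    rw [show Polynomial.C (4:ℚ) * m * (Polynomial.C (4⁻¹:ℚ) * s)
        = (Polynomial.C (4:ℚ) * Polynomial.C (4⁻¹:ℚ)) * (m * s) from by ring,
      ← Polynomial.C_mul]
    norm_num
  -- Gauss
  set qZ : ℤ[X] := Polynomial.C 4 * (X:ℤ[X])^2 - Polynomial.C 7 * X + Polynomial.C 4 with hqZdef
  have hqZ_dvd_prim : qZ ∣ p.primPart := by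
    rw [(Polynomial.IsPrimitive.Int.dvd_iff_map_cast_dvd_map_cast qZ p.primPart qZ_primitive)]
    rw [hqZdef, qZ_map, ← hqQdef]
    -- qQ ∣ map primPart
    have hcontent : (p.content : ℚ) ≠ 0 := by
      exact_mod_cast fun hc => hp0 (Polynomial.content_eq_zero_iff.mp (by exact_mod_cast hc))
    have hpq_eq : pq = Polynomial.C (p.content : ℚ) * p.primPart.map (Int.castRingHom ℚ) := by
      rw [hpqdef]
      conv_lhs => rw [p.eq_C_content_mul_primPart]
      rw [Polynomial.map_mul, Polynomial.map_C]
      norm_num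
    obtain ⟨s, hs⟩ := hqQ_dvd
    refine ⟨Polynomial.C ((p.content : ℚ))⁻¹ * s, ?_⟩
    have : Polynomial.C ((p.content:ℚ))⁻¹ * pq = p.primPart.map (Int.castRingHom ℚ) := by
      rw [hpq_eq, ← mul_assoc, ← Polynomial.C_mul, inv_mul_cancel₀ hcontent]
      simp
    rw [← this, hs]
    ring
  have hqZ_dvd_p : qZ ∣ p := dvd_trans hqZ_dvd_prim p.primPart_dvd
  -- back to Laurent
  obtain ⟨s, hs⟩ := hqZ_dvd_p
  rw [hgT, hs, map_mul, hqZdef, toLaurent_qZ]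
  exact ⟨T 1 * s.toLaurent * T (-n), by ring⟩

end Delta74aux

namespace Delta74aux

lemma delta_val : (4:ℂ) * al - 7 + 4 * al⁻¹ = 0 := by
  linear_combination (1/2 : ℂ) * h8al + (1/2 : ℂ) * h8be

end Delta74aux

end Delta74aux

/-- Key Lemma (Section 4): if `±H(t)H(t⁻¹) = f(t)·Δ_{7₄}(t) + 2·g(t)·g(t⁻¹)` in
`ℤ[T,T⁻¹]`, then the Alexander polynomial `Δ_{7₄} = 4T − 7 + 4T⁻¹` divides `g`. -/
theorem delta74_divides_g (f g H : LaurentPolynomial ℤ) (ε : ℤ) (hε : ε = 1 ∨ ε = -1)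
    (h : (ε : LaurentPolynomial ℤ) * (H * invert H) =
      f * (4 * T 1 - 7 + 4 * T (-1)) + 2 * (g * invert g)) :
    (4 * T 1 - 7 + 4 * T (-1) : LaurentPolynomial ℤ) ∣ g := by
  apply Delta74aux.dvd_of_phi_eq_zero
  have hφ := congrArg Delta74aux.φ h
  simp only [map_mul, map_add, map_sub, map_intCast, map_ofNat, Delta74aux.φ_invert,
    Delta74aux.φ_T] at hφ
  rw [zpow_one, zpow_neg_one] at hφ
  -- coordinates
  obtain ⟨a, b, j, hA⟩ := Delta74aux.mem H
  obtain ⟨c, d, k, hB⟩ := Delta74aux.mem g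
  have hA' : (2:ℂ)^j * (starRingEnd ℂ) (Delta74aux.φ H) = (a:ℂ) - b*Complex.I*Delta74aux.sc := by
    have := congrArg (starRingEnd ℂ) hA
    simp only [map_mul, map_pow, map_add, map_intCast, Complex.conj_I,
      Delta74aux.conj_sc, map_ofNat] at this
    linear_combination this
  have hB' : (2:ℂ)^k * (starRingEnd ℂ) (Delta74aux.φ g) = (c:ℂ) - d*Complex.I*Delta74aux.sc := by
    have := congrArg (starRingEnd ℂ) hB
    simp only [map_mul, map_pow, map_add, map_intCast, Complex.conj_I,
      Delta74aux.conj_sc, map_ofNat] at this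
    linear_combination this
  have h4j : ((4:ℂ))^j = 2^j * 2^j := by rw [← mul_pow]; norm_num
  have h4k : ((4:ℂ))^k = 2^k * 2^k := by rw [← mul_pow]; norm_num
  have e1 : ((a:ℂ)^2 + 15*b^2)
      = 4^j * (Delta74aux.φ H * (starRingEnd ℂ) (Delta74aux.φ H)) := by
    rw [h4j]
    linear_combination (-((a:ℂ) - b*Complex.I*Delta74aux.sc)) * hA
      + (-((2:ℂ)^j * Delta74aux.φ H)) * hA' + ((b:ℂ)^2) * Delta74aux.hIsq
  have e2 : ((c:ℂ)^2 + 15*d^2)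
      = 4^k * (Delta74aux.φ g * (starRingEnd ℂ) (Delta74aux.φ g)) := by
    rw [h4k]
    linear_combination (-((c:ℂ) - d*Complex.I*Delta74aux.sc)) * hB
      + (-((2:ℂ)^k * Delta74aux.φ g)) * hB' + ((d:ℂ)^2) * Delta74aux.hIsq
  have hint : (ε * (4^k * (a^2+15*b^2)) : ℤ) = (2 * 4^j * (c^2+15*d^2) : ℤ) := by
    have hcast : ((ε * (4^k * (a^2+15*b^2)) : ℤ) : ℂ) = ((2 * 4^j * (c^2+15*d^2) : ℤ) : ℂ) := by
      push_cast
      rw [e1, e2]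
      linear_combination ((4:ℂ)^j * 4^k) * hφ
        + ((4:ℂ)^j * 4^k * Delta74aux.φ f) * Delta74aux.delta_val
    exact_mod_cast hcast
  have hcd : c = 0 ∧ d = 0 := by
    rcases hε with rfl | rfl
    · have := Delta74aux.descent k j _ a b c d rfl (by linarith [hint])
      exact ⟨this.2.2.1, this.2.2.2⟩
    · constructor <;> nlinarith [sq_nonneg a, sq_nonneg b, sq_nonneg c, sq_nonneg d,
        pow_pos (by norm_num : (0:ℤ) < 4) j, pow_pos (by norm_num : (0:ℤ) < 4) k]
  have hBzero : (2:ℂ)^k * Delta74aux.φ g = 0 := by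
    rw [hB, hcd.1, hcd.2]
    push_cast
    ring
  have h2k : ((2:ℂ))^k ≠ 0 := pow_ne_zero _ two_ne_zero
  exact (mul_eq_zero.mp hBzero).resolve_left h2k
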